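/- Let G = {·|*} (the game whose only Right option is * = {0|0} and with no Left option). In the universe U = D(G) generated by G, the position G is Right U-strong: for every Right end X in U (necessarily of the form k copies of the conjugate of G), Right moving first wins G + X under misère play. -/

import Mathlib

/-- A (finite) partizan game: finite lists of Left and Right options. -/
inductive Gm : Type where
  | node : List Gm → List Gm → Gm

/-- The Left options of a game. -/
def Gm.leftOpts : Gm → List Gm
  | .node l _ => l

/-- The Right options of a game. -/
def Gm.rightOpts : Gm → List Gm
  | .node _ r => r

/-- Disjunctive sum of games. -/
def Gm.add : Gm → Gm → Gm
  | .node gl gr, .node hl hr =>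
      .node
        (gl.attach.map (fun g => Gm.add g.1 (.node hl hr)) ++
         hl.attach.map (fun h => Gm.add (.node gl gr) h.1))
        (gr.attach.map (fun g => Gm.add g.1 (.node hl hr)) ++
         hr.attach.map (fun h => Gm.add (.node gl gr) h.1))
termination_by g h => sizeOf g + sizeOf h
decreasing_by
  all_goals first
  | (have := List.sizeOf_lt_of_mem g.2; simp; omega)
  | (have := List.sizeOf_lt_of_mem h.2; simp; omega)

mutual
/-- Left, moving first, wins `G` under misère play (a player unable to move wins):
`G` is a Left end, or some Left option is a loss for Right moving first. -/
def Gm.lwins : Gm → Prop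
  | .node l _ => l = [] ∨ ∃ g ∈ l.attach, ¬ Gm.rwins g.1
termination_by G => sizeOf G
decreasing_by have := List.sizeOf_lt_of_mem g.2; simp; omega

/-- Right, moving first, wins `G` under misère play. -/
def Gm.rwins : Gm → Prop
  | .node _ r => r = [] ∨ ∃ g ∈ r.attach, ¬ Gm.lwins g.1
termination_by G => sizeOf G
decreasing_by have := List.sizeOf_lt_of_mem g.2; simp; omega
end

/-- The game `0`. -/
def Gm.zero : Gm := .node [] []

/-- The game `* = {0|0}`. -/
def Gm.star : Gm := .node [Gm.zero] [Gm.zero]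

/-- The conjugate of a game: swap the roles of Left and Right everywhere. -/
def Gm.conj : Gm → Gm
  | .node l r =>
      .node (r.attach.map (fun g => Gm.conj g.1)) (l.attach.map (fun g => Gm.conj g.1))
termination_by G => sizeOf G
decreasing_by
  all_goals (have := List.sizeOf_lt_of_mem g.2; simp; omega)

/-- `k` copies of `x`, added together. -/
def Gm.ksum : ℕ → Gm → Gm
  | 0, _ => Gm.zero
  | n+1, x => (Gm.ksum n x).add x

-- unfolding lemmas
lemma lwins_iff (X : Gm) : X.lwins ↔ (X.leftOpts = [] ∨ ∃ g ∈ X.leftOpts, ¬ Gm.rwins g) := by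
  cases X with
  | node l r => rw [Gm.lwins]; simp [Gm.leftOpts]

lemma rwins_iff (X : Gm) : X.rwins ↔ (X.rightOpts = [] ∨ ∃ g ∈ X.rightOpts, ¬ Gm.lwins g) := by
  cases X with
  | node l r => rw [Gm.rwins]; simp [Gm.rightOpts]

lemma add_leftOpts (X Y : Gm) :
    (X.add Y).leftOpts
      = X.leftOpts.map (fun g => g.add Y) ++ Y.leftOpts.map (fun h => X.add h) := by
  cases X with | node gl gr => cases Y with | node hl hr =>
  rw [Gm.add]; simp [Gm.leftOpts, List.map_attach_eq_pmap]

lemma add_rightOpts (X Y : Gm) :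
    (X.add Y).rightOpts
      = X.rightOpts.map (fun g => g.add Y) ++ Y.rightOpts.map (fun h => X.add h) := by
  cases X with | node gl gr => cases Y with | node hl hr =>
  rw [Gm.add]; simp [Gm.rightOpts, List.map_attach_eq_pmap]

/-- `Cfg a b X` : the position `X` behaves exactly like a sum of `a` copies of `*`
and `b` copies of `conj {·|*} = {*|·}`. -/
def Cfg : ℕ → ℕ → Gm → Prop
  | a, b, .node l r =>
    (r = [] ↔ a = 0) ∧
    (∀ y ∈ r.attach, 0 < a ∧ Cfg (a-1) b y.1) ∧
    (l = [] ↔ (a = 0 ∧ b = 0)) ∧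
    (∀ y ∈ l.attach, (0 < a ∧ Cfg (a-1) b y.1) ∨ (0 < b ∧ Cfg (a+1) (b-1) y.1)) ∧
    (0 < b → ∃ y ∈ l.attach, Cfg (a+1) (b-1) y.1)
termination_by a b X => sizeOf X
decreasing_by
  all_goals (have := List.sizeOf_lt_of_mem y.2; simp; omega)

lemma cfg_iff (a b : ℕ) (X : Gm) : Cfg a b X ↔
    ((X.rightOpts = [] ↔ a = 0) ∧
    (∀ y ∈ X.rightOpts, 0 < a ∧ Cfg (a-1) b y) ∧
    (X.leftOpts = [] ↔ (a = 0 ∧ b = 0)) ∧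
    (∀ y ∈ X.leftOpts, (0 < a ∧ Cfg (a-1) b y) ∨ (0 < b ∧ Cfg (a+1) (b-1) y)) ∧
    (0 < b → ∃ y ∈ X.leftOpts, Cfg (a+1) (b-1) y)) := by
  cases X with
  | node l r => rw [Cfg]; simp [Gm.leftOpts, Gm.rightOpts]

/-- `Cfg 0 b X → X` is a Right end, so Right moving first wins. -/
lemma rwins_of_cfg0 (b : ℕ) (X : Gm) (h : Cfg 0 b X) : X.rwins := by
  rw [cfg_iff] at h
  rw [rwins_iff]
  exact Or.inl (h.1.mpr rfl)

/-- Key winner facts at `a = 0, 1`. -/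
lemma W12 (b : ℕ) :
    (∀ X, Cfg 0 b X → X.lwins) ∧ (∀ X, Cfg 1 b X → ¬ X.rwins) := by
  induction b with
  | zero =>
    have h1 : ∀ X, Cfg 0 0 X → X.lwins := by
      intro X h
      rw [cfg_iff] at h
      rw [lwins_iff]
      exact Or.inl (h.2.2.1.mpr ⟨rfl, rfl⟩)
    refine ⟨h1, ?_⟩
    intro X h
    rw [cfg_iff] at h
    rw [rwins_iff]
    push_neg
    constructor
    · intro he; exact one_ne_zero (h.1.mp he)
    · intro y hy
      exact h1 y (h.2.1 y hy).2
  | succ b ih =>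
    have h1 : ∀ X, Cfg 0 (b+1) X → X.lwins := by
      intro X h
      rw [cfg_iff] at h
      obtain ⟨y, hy, hcfg⟩ := h.2.2.2.2 (Nat.succ_pos b)
      rw [lwins_iff]
      exact Or.inr ⟨y, hy, ih.2 y hcfg⟩
    refine ⟨h1, ?_⟩
    intro X h
    rw [cfg_iff] at h
    rw [rwins_iff]
    push_neg
    constructor
    · intro he; exact one_ne_zero (h.1.mp he)
    · intro y hy
      exact h1 y (h.2.1 y hy).2

lemma W34 (b : ℕ) :
    (∀ X, Cfg 1 b X → ¬ X.lwins) ∧ (∀ X, Cfg 2 b X → X.rwins) := by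
  induction b with
  | zero =>
    have h3 : ∀ X, Cfg 1 0 X → ¬ X.lwins := by
      intro X h
      rw [cfg_iff] at h
      rw [lwins_iff]
      push_neg
      constructor
      · intro he; exact absurd (h.2.2.1.mp he).1 one_ne_zero
      · intro y hy
        rcases h.2.2.2.1 y hy with ⟨_, hcfg⟩ | ⟨hb, _⟩
        · exact rwins_of_cfg0 0 y hcfg
        · exact absurd hb (lt_irrefl 0)
    refine ⟨h3, ?_⟩
    intro X h
    rw [cfg_iff] at h
    have hne : X.rightOpts ≠ [] := by
      intro he; exact absurd (h.1.mp he) two_ne_zero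
    obtain ⟨y, hy⟩ := List.exists_mem_of_ne_nil _ hne
    rw [rwins_iff]
    exact Or.inr ⟨y, hy, h3 y (h.2.1 y hy).2⟩
  | succ b ih =>
    have h3 : ∀ X, Cfg 1 (b+1) X → ¬ X.lwins := by
      intro X h
      rw [cfg_iff] at h
      rw [lwins_iff]
      push_neg
      constructor
      · intro he; exact absurd (h.2.2.1.mp he).1 one_ne_zero
      · intro y hy
        rcases h.2.2.2.1 y hy with ⟨_, hcfg⟩ | ⟨_, hcfg⟩
        · exact rwins_of_cfg0 _ y hcfg
        · exact ih.2 y hcfg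
    refine ⟨h3, ?_⟩
    intro X h
    rw [cfg_iff] at h
    have hne : X.rightOpts ≠ [] := by
      intro he; exact absurd (h.1.mp he) two_ne_zero
    obtain ⟨y, hy⟩ := List.exists_mem_of_ne_nil _ hne
    rw [rwins_iff]
    exact Or.inr ⟨y, hy, h3 y (h.2.1 y hy).2⟩

lemma sizeOf_lt_of_mem_leftOpts {y X : Gm} (h : y ∈ X.leftOpts) : sizeOf y < sizeOf X := by
  cases X with
  | node l r =>
    have := List.sizeOf_lt_of_mem (show y ∈ l from h)
    simp; omega

lemma sizeOf_lt_of_mem_rightOpts {y X : Gm} (h : y ∈ X.rightOpts) : sizeOf y < sizeOf X := by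
  cases X with
  | node l r =>
    have := List.sizeOf_lt_of_mem (show y ∈ r from h)
    simp; omega

/-- `Cfg` is additive. -/
lemma cfg_add : ∀ (n : ℕ) (X Y : Gm) (a b c d : ℕ), sizeOf X + sizeOf Y ≤ n →
    Cfg a b X → Cfg c d Y → Cfg (a+c) (b+d) (X.add Y) := by
  intro n
  induction n using Nat.strong_induction_on with
  | _ n ih =>
  intro X Y a b c d hn hX hY
  have hX' := (cfg_iff a b X).mp hX
  have hY' := (cfg_iff c d Y).mp hY
  rw [cfg_iff, add_leftOpts, add_rightOpts]
  refine ⟨?_, ?_, ?_, ?_, ?_⟩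
  · simp only [List.append_eq_nil_iff, List.map_eq_nil_iff]
    rw [hX'.1, hY'.1]; omega
  · intro y hy
    rcases List.mem_append.mp hy with hy | hy
    · obtain ⟨x, hx, rfl⟩ := List.mem_map.mp hy
      obtain ⟨ha, hcfg⟩ := hX'.2.1 x hx
      have hsz := sizeOf_lt_of_mem_rightOpts hx
      have : Cfg (a-1+c) (b+d) (x.add Y) :=
        ih (sizeOf x + sizeOf Y) (by omega) x Y _ _ _ _ le_rfl hcfg hY
      refine ⟨by omega, ?_⟩
      have he : a + c - 1 = a - 1 + c := by omega
      rwa [he]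
    · obtain ⟨x, hx, rfl⟩ := List.mem_map.mp hy
      obtain ⟨hc, hcfg⟩ := hY'.2.1 x hx
      have hsz := sizeOf_lt_of_mem_rightOpts hx
      have : Cfg (a+(c-1)) (b+d) (X.add x) :=
        ih (sizeOf X + sizeOf x) (by omega) X x _ _ _ _ le_rfl hX hcfg
      refine ⟨by omega, ?_⟩
      have he : a + c - 1 = a + (c - 1) := by omega
      rwa [he]
  · simp only [List.append_eq_nil_iff, List.map_eq_nil_iff]
    rw [hX'.2.2.1, hY'.2.2.1]; omega
  · intro y hy
    rcases List.mem_append.mp hy with hy | hy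
    · obtain ⟨x, hx, rfl⟩ := List.mem_map.mp hy
      have hsz := sizeOf_lt_of_mem_leftOpts hx
      rcases hX'.2.2.2.1 x hx with ⟨ha, hcfg⟩ | ⟨hb, hcfg⟩
      · left
        have : Cfg (a-1+c) (b+d) (x.add Y) :=
          ih (sizeOf x + sizeOf Y) (by omega) x Y _ _ _ _ le_rfl hcfg hY
        refine ⟨by omega, ?_⟩
        have he : a + c - 1 = a - 1 + c := by omega
        rwa [he]
      · right
        have : Cfg (a+1+c) (b-1+d) (x.add Y) :=
          ih (sizeOf x + sizeOf Y) (by omega) x Y _ _ _ _ le_rfl hcfg hY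
        refine ⟨by omega, ?_⟩
        have he : b + d - 1 = b - 1 + d := by omega
        have he2 : a + c + 1 = a + 1 + c := by omega
        rw [he, he2]; exact this
    · obtain ⟨x, hx, rfl⟩ := List.mem_map.mp hy
      have hsz := sizeOf_lt_of_mem_leftOpts hx
      rcases hY'.2.2.2.1 x hx with ⟨hc, hcfg⟩ | ⟨hd, hcfg⟩
      · left
        have : Cfg (a+(c-1)) (b+d) (X.add x) :=
          ih (sizeOf X + sizeOf x) (by omega) X x _ _ _ _ le_rfl hX hcfg
        refine ⟨by omega, ?_⟩
        have he : a + c - 1 = a + (c - 1) := by omega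
        rwa [he]
      · right
        have : Cfg (a+(c+1)) (b+(d-1)) (X.add x) :=
          ih (sizeOf X + sizeOf x) (by omega) X x _ _ _ _ le_rfl hX hcfg
        refine ⟨by omega, ?_⟩
        have he1 : a + c + 1 = a + (c+1) := by omega
        have he2 : b + d - 1 = b + (d - 1) := by omega
        rwa [he1, he2]
  · intro hbd
    by_cases hb : 0 < b
    · obtain ⟨x, hx, hcfg⟩ := hX'.2.2.2.2 hb
      have hsz := sizeOf_lt_of_mem_leftOpts hx
      refine ⟨x.add Y, List.mem_append.mpr (Or.inl (List.mem_map.mpr ⟨x, hx, rfl⟩)), ?_⟩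
      have : Cfg (a+1+c) (b-1+d) (x.add Y) :=
        ih (sizeOf x + sizeOf Y) (by omega) x Y _ _ _ _ le_rfl hcfg hY
      have he : b + d - 1 = b - 1 + d := by omega
      have he2 : a + c + 1 = a + 1 + c := by omega
      rw [he, he2]; exact this
    · have hd : 0 < d := by omega
      obtain ⟨x, hx, hcfg⟩ := hY'.2.2.2.2 hd
      have hsz := sizeOf_lt_of_mem_leftOpts hx
      refine ⟨X.add x, List.mem_append.mpr (Or.inr (List.mem_map.mpr ⟨x, hx, rfl⟩)), ?_⟩
      have : Cfg (a+(c+1)) (b+(d-1)) (X.add x) :=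
        ih (sizeOf X + sizeOf x) (by omega) X x _ _ _ _ le_rfl hX hcfg
      have he1 : a + c + 1 = a + (c+1) := by omega
      have he2 : b + d - 1 = b + (d - 1) := by omega
      rwa [he1, he2]

lemma cfg_zero : Cfg 0 0 Gm.zero := by
  rw [cfg_iff]
  simp [Gm.zero, Gm.leftOpts, Gm.rightOpts]

lemma cfg_star : Cfg 1 0 Gm.star := by
  rw [cfg_iff]
  simp [Gm.star, Gm.leftOpts, Gm.rightOpts]
  exact cfg_zero

lemma conj_G : Gm.conj (Gm.node [] [Gm.star]) = Gm.node [Gm.star] [] := by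
  simp only [Gm.conj, Gm.star, Gm.zero, List.map_attach_eq_pmap, List.attach, List.attachWith, List.map_nil, List.map_cons, List.pmap]

lemma cfg_conjG : Cfg 0 1 (Gm.conj (Gm.node [] [Gm.star])) := by
  rw [conj_G, cfg_iff]
  simp [Gm.leftOpts, Gm.rightOpts]
  exact cfg_star

lemma cfg_ksum (k : ℕ) : Cfg 0 k (Gm.ksum k (Gm.conj (Gm.node [] [Gm.star]))) := by
  induction k with
  | zero => exact cfg_zero
  | succ n ihn =>
    have := cfg_add (sizeOf (Gm.ksum n (Gm.conj (Gm.node [] [Gm.star]))) +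
        sizeOf (Gm.conj (Gm.node [] [Gm.star])))
      _ _ 0 n 0 1 le_rfl ihn cfg_conjG
    simpa [Gm.ksum] using this

/-- let `G = {·|*}` and `U = D(G)`. Then `G` is Right `U`-strong:
for every Right end `X` of `U` (necessarily of the form `k` copies of the
conjugate of `G`), Right moving first wins `G + X` under misère play. -/
theorem stmt15 :
    ∀ k : ℕ,
      Gm.rwins ((Gm.node [] [Gm.star]).add
        (Gm.ksum k (Gm.conj (Gm.node [] [Gm.star])))) := by
  intro k
  set S := Gm.ksum k (Gm.conj (Gm.node [] [Gm.star])) with hS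
  have hcfgS : Cfg 0 k S := cfg_ksum k
  have hstar : Cfg 1 k (Gm.star.add S) := by
    have := cfg_add (sizeOf Gm.star + sizeOf S) Gm.star S 1 0 0 k le_rfl cfg_star hcfgS
    simpa using this
  rw [rwins_iff, add_rightOpts]
  have hSr : S.rightOpts = [] := ((cfg_iff 0 k S).mp hcfgS).1.mpr rfl
  refine Or.inr ⟨Gm.star.add S, ?_, (W34 k).1 _ hstar⟩
  simp [Gm.rightOpts, hSr]
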